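/- arXiv:1806.00998 — 4 statements merged into one kernel-verified Lean document; each statement's English description precedes it below -/
import Mathlib

section
/- For any string of positive real numbers ρ = (ρ_1, ..., ρ_K) and any real λ > 0, the number of tuples (n_1, ..., n_K) of natural numbers satisfying n_1 ρ_1 + ... + n_K ρ_K ≤ λ is at most (λ + ρ_1 + ... + ρ_K)^K / (K! · ρ_1 ⋯ ρ_K). -/
open Finset

-- Bernoulli-type inequality: b^(K+1) + (K+1)·ρ·b^K ≤ (b+ρ)^(K+1)
lemma key_pow_ineq (K : ℕ) : ∀ b r : ℝ, 0 ≤ b → 0 ≤ r →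
    b ^ (K + 1) + (K + 1 : ℝ) * r * b ^ K ≤ (b + r) ^ (K + 1) := by
  induction K with
  | zero => intro b r hb hr; simp
  | succ K ih =>
    intro b r hb hr
    have h := ih b r hb hr
    have hbK : (0:ℝ) ≤ b ^ K := pow_nonneg hb K
    have hbr : (0:ℝ) ≤ b + r := by linarith
    have step1 : b ^ (K + 2) + (K + 2 : ℝ) * r * b ^ (K + 1) ≤
        (b + r) * (b ^ (K + 1) + (K + 1 : ℝ) * r * b ^ K) := by
      have h1 : (0:ℝ) ≤ (K + 1 : ℝ) * (r * r) * b ^ K := by positivity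
      ring_nf
      nlinarith [h1]
    have step2 : (b + r) * (b ^ (K + 1) + (K + 1 : ℝ) * r * b ^ K) ≤
        (b + r) * (b + r) ^ (K + 1) := mul_le_mul_of_nonneg_left h hbr
    have : (b + r) * (b + r) ^ (K + 1) = (b + r) ^ (K + 2) := by ring
    push_cast
    push_cast at step1
    nlinarith [step1, step2, this]

lemma sol_finite (K : ℕ) (ρ : Fin K → ℝ) (hρ : ∀ i, 0 < ρ i) (lam : ℝ) :
    Finite {n : Fin K → ℕ // ∑ i, (n i : ℝ) * ρ i ≤ lam} := by
  apply Finite.of_injective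
    (f := fun n : {n : Fin K → ℕ // ∑ i, (n i : ℝ) * ρ i ≤ lam} =>
      (fun i => (⟨n.1 i, by
        have hterm : (n.1 i : ℝ) * ρ i ≤ lam := by
          refine le_trans ?_ n.2
          exact Finset.single_le_sum (f := fun j => (n.1 j : ℝ) * ρ j)
            (fun j _ => mul_nonneg (Nat.cast_nonneg _) (hρ j).le) (Finset.mem_univ i)
        have : (n.1 i : ℝ) ≤ lam / ρ i := (le_div_iff₀ (hρ i)).2 hterm
        exact Nat.lt_succ_of_le (Nat.le_floor this)⟩ : Fin (⌊lam / ρ i⌋₊ + 1))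
        : ∀ i, Fin (⌊lam / ρ i⌋₊ + 1)))
  intro a b hab
  ext i
  exact congrArg Fin.val (congrFun hab i)

lemma count_le : ∀ (K : ℕ) (ρ : Fin K → ℝ), (∀ i, 0 < ρ i) → ∀ lam : ℝ, 0 ≤ lam →
    (Nat.card {n : Fin K → ℕ // ∑ i, (n i : ℝ) * ρ i ≤ lam} : ℝ) ≤
      (lam + ∑ i, ρ i) ^ K / ((K.factorial : ℝ) * ∏ i, ρ i) := by
  intro K
  induction K with
  | zero =>
    intro ρ hρ lam hlam
    have htriv : ∀ n : Fin 0 → ℕ, ∑ i, (n i : ℝ) * ρ i ≤ lam := by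
      intro n; simpa using hlam
    have : Nat.card {n : Fin 0 → ℕ // ∑ i, (n i : ℝ) * ρ i ≤ lam} = 1 := by
      rw [Nat.card_eq_one_iff_unique]
      constructor
      · exact ⟨fun a b => Subtype.ext (by ext i; exact absurd i.2 (Nat.not_lt_zero _))⟩
      · exact ⟨⟨fun i => 0, htriv _⟩⟩
    rw [this]
    simp
  | succ K ih =>
    intro ρ hρ lam hlam
    set ρ0 : ℝ := ρ 0 with hρ0
    have hρ0pos : 0 < ρ0 := hρ 0
    set ρ' : Fin K → ℝ := fun i => ρ i.succ with hρ'def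
    have hρ' : ∀ i, 0 < ρ' i := fun i => hρ i.succ
    set M : ℕ := ⌊lam / ρ0⌋₊ with hM
    have hMρ0 : (M : ℝ) * ρ0 ≤ lam := by
      have := Nat.floor_le (by positivity : (0:ℝ) ≤ lam / ρ0)
      calc (M : ℝ) * ρ0 ≤ (lam / ρ0) * ρ0 := by
            exact mul_le_mul_of_nonneg_right this hρ0pos.le
        _ = lam := by field_simp
    -- the sigma decomposition
    set T : ℕ → Type := fun m => {n : Fin K → ℕ // ∑ i, (n i : ℝ) * ρ' i ≤ lam - m * ρ0}
      with hT
    haveI : ∀ m : ℕ, Finite (T m) := fun m => sol_finite K ρ' hρ' _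
    haveI : Finite {n : Fin (K+1) → ℕ // ∑ i, (n i : ℝ) * ρ i ≤ lam} :=
      sol_finite (K+1) ρ hρ lam
    have e : {n : Fin (K+1) → ℕ // ∑ i, (n i : ℝ) * ρ i ≤ lam} ≃
        Σ m : Fin (M + 1), T (m : ℕ) := by
      refine ⟨fun n => ⟨⟨n.1 0, ?_⟩, ⟨Fin.tail n.1, ?_⟩⟩,
        fun p => ⟨Fin.cons p.1.1 p.2.1, ?_⟩, ?_, ?_⟩
      · -- n 0 < M + 1
        have hterm : (n.1 0 : ℝ) * ρ0 ≤ lam := by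
          refine le_trans ?_ n.2
          exact Finset.single_le_sum (f := fun j => (n.1 j : ℝ) * ρ j)
            (fun j _ => mul_nonneg (Nat.cast_nonneg _) (hρ j).le) (Finset.mem_univ 0)
        have : (n.1 0 : ℝ) ≤ lam / ρ0 := (le_div_iff₀ hρ0pos).2 hterm
        exact Nat.lt_succ_of_le (Nat.le_floor this)
      · -- tail condition
        have hsum := n.2
        rw [Fin.sum_univ_succ] at hsum
        have : ∑ i : Fin K, ((Fin.tail n.1 i : ℝ)) * ρ' i
            = ∑ i : Fin K, (n.1 i.succ : ℝ) * ρ i.succ := rfl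
        rw [this]
        linarith
      · -- cons condition
        have hp := p.2.2
        rw [Fin.sum_univ_succ]
        simp only [Fin.cons_zero, Fin.cons_succ]
        have : ∑ i : Fin K, ((p.2.1 i : ℝ)) * ρ i.succ
            = ∑ i : Fin K, (p.2.1 i : ℝ) * ρ' i := rfl
        rw [this]
        linarith
      · intro n
        apply Subtype.ext
        exact Fin.cons_self_tail n.1
      · rintro ⟨⟨m, hm⟩, ⟨f, hf⟩⟩
        refine Sigma.ext (Fin.ext ?_) (heq_of_eqRec_eq ?_ ?_) <;>
          simp [Fin.cons_zero, Fin.tail_cons] <;> rfl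
    haveI : Fintype {n : Fin (K+1) → ℕ // ∑ i, (n i : ℝ) * ρ i ≤ lam} := Fintype.ofFinite _
    haveI : ∀ m : Fin (M+1), Fintype (T (m : ℕ)) := fun m => Fintype.ofFinite _
    have hcard : (Nat.card {n : Fin (K+1) → ℕ // ∑ i, (n i : ℝ) * ρ i ≤ lam} : ℝ)
        = ∑ m : Fin (M + 1), (Nat.card (T (m : ℕ)) : ℝ) := by
      rw [Nat.card_congr e]
      rw [Nat.card_eq_fintype_card]
      rw [Fintype.card_sigma]
      push_cast
      refine Finset.sum_congr rfl (fun m _ => ?_)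
      rw [Nat.card_eq_fintype_card]
    rw [hcard]
    -- abbreviations
    set S' : ℝ := ∑ i, ρ' i with hS'
    set P' : ℝ := ∏ i, ρ' i with hP'
    have hS'nonneg : 0 ≤ S' := Finset.sum_nonneg (fun i _ => (hρ' i).le)
    have hP'pos : 0 < P' := Finset.prod_pos (fun i _ => hρ' i)
    have hmlam : ∀ m : Fin (M+1), 0 ≤ lam - (m : ℕ) * ρ0 := by
      intro m
      have h1 : ((m : ℕ) : ℝ) ≤ (M : ℝ) := by
        exact_mod_cast Nat.lt_succ_iff.1 m.2
      nlinarith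
    have hIH : ∀ m : Fin (M+1), (Nat.card (T (m : ℕ)) : ℝ) ≤
        (lam - (m : ℕ) * ρ0 + S') ^ K / ((K.factorial : ℝ) * P') := by
      intro m
      exact ih ρ' hρ' (lam - (m : ℕ) * ρ0) (hmlam m)
    have step1 : ∑ m : Fin (M + 1), (Nat.card (T (m : ℕ)) : ℝ) ≤
        ∑ m : Fin (M + 1), (lam - (m : ℕ) * ρ0 + S') ^ K / ((K.factorial : ℝ) * P') :=
      Finset.sum_le_sum (fun m _ => hIH m)
    refine le_trans step1 ?_
    -- telescoping bound
    have htele : (K + 1 : ℝ) * ρ0 * ∑ m ∈ Finset.range (M + 1),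
        (lam - (m : ℕ) * ρ0 + S') ^ K ≤ (lam + ρ0 + S') ^ (K + 1) := by
      have hterm : ∀ m ∈ Finset.range (M + 1),
          (K + 1 : ℝ) * ρ0 * (lam - (m : ℕ) * ρ0 + S') ^ K ≤
            (lam + S' + ρ0 - (m : ℕ) * ρ0) ^ (K+1)
              - (lam + S' + ρ0 - ((m : ℕ) + 1) * ρ0) ^ (K+1) := by
        intro m hm
        have hmM : m ≤ M := Nat.lt_succ_iff.1 (Finset.mem_range.1 hm)
        have hb : 0 ≤ lam - (m : ℕ) * ρ0 + S' := by
          have h1 : ((m : ℕ) : ℝ) ≤ (M : ℝ) := by exact_mod_cast hmM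
          nlinarith
        have := key_pow_ineq K (lam - (m : ℕ) * ρ0 + S') ρ0 hb hρ0pos.le
        have harg : lam - (m : ℕ) * ρ0 + S' + ρ0 = lam + S' + ρ0 - (m : ℕ) * ρ0 := by ring
        have harg2 : lam - (m : ℕ) * ρ0 + S' = lam + S' + ρ0 - ((m : ℕ) + 1) * ρ0 := by ring
        rw [← harg, ← harg2]
        linarith [this]
      have hsum : ∑ m ∈ Finset.range (M + 1),
          ((lam + S' + ρ0 - (m : ℕ) * ρ0) ^ (K+1)
            - (lam + S' + ρ0 - ((m : ℕ) + 1) * ρ0) ^ (K+1))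
          = (lam + S' + ρ0) ^ (K+1) - (lam + S' + ρ0 - ((M : ℕ) + 1) * ρ0) ^ (K+1) := by
        have := Finset.sum_range_sub' (fun m : ℕ => (lam + S' + ρ0 - (m : ℕ) * ρ0) ^ (K+1)) (M+1)
        simpa using this
      have hlast : 0 ≤ (lam + S' + ρ0 - ((M : ℕ) + 1) * ρ0) ^ (K+1) := by
        have : 0 ≤ lam + S' + ρ0 - ((M : ℕ) + 1) * ρ0 := by nlinarith
        positivity
      calc (K + 1 : ℝ) * ρ0 * ∑ m ∈ Finset.range (M + 1), (lam - (m : ℕ) * ρ0 + S') ^ K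
          = ∑ m ∈ Finset.range (M + 1), (K + 1 : ℝ) * ρ0 * (lam - (m : ℕ) * ρ0 + S') ^ K := by
            rw [Finset.mul_sum]
        _ ≤ ∑ m ∈ Finset.range (M + 1),
            ((lam + S' + ρ0 - (m : ℕ) * ρ0) ^ (K+1)
              - (lam + S' + ρ0 - ((m : ℕ) + 1) * ρ0) ^ (K+1)) := Finset.sum_le_sum hterm
        _ = (lam + S' + ρ0) ^ (K+1) - (lam + S' + ρ0 - ((M : ℕ) + 1) * ρ0) ^ (K+1) := hsum
        _ ≤ (lam + S' + ρ0) ^ (K+1) := by linarith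
        _ = (lam + ρ0 + S') ^ (K+1) := by ring_nf
    -- now finish
    have hfin_sum : ∑ m : Fin (M + 1), (lam - (m : ℕ) * ρ0 + S') ^ K / ((K.factorial : ℝ) * P')
        = (∑ m ∈ Finset.range (M + 1), (lam - (m : ℕ) * ρ0 + S') ^ K) / ((K.factorial : ℝ) * P') := by
      rw [← Finset.sum_div,
        Fin.sum_univ_eq_sum_range (fun m : ℕ => (lam - (m : ℝ) * ρ0 + S') ^ K) (M + 1)]
    rw [hfin_sum]
    have hrhs : lam + ∑ i, ρ i = lam + ρ0 + S' := by
      rw [Fin.sum_univ_succ]; ring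
    have hrhsd : ((K+1).factorial : ℝ) * ∏ i, ρ i = (K + 1 : ℝ) * ((K.factorial : ℝ) * (ρ0 * P')) := by
      rw [Fin.prod_univ_succ, Nat.factorial_succ]
      push_cast; ring
    rw [hrhs, hrhsd]
    set Q : ℝ := ∑ m ∈ Finset.range (M + 1), (lam - (m : ℕ) * ρ0 + S') ^ K with hQ
    have hQnonneg : 0 ≤ Q := by
      apply Finset.sum_nonneg
      intro m hm
      have hmM : m ≤ M := Nat.lt_succ_iff.1 (Finset.mem_range.1 hm)
      have h1 : ((m : ℕ) : ℝ) ≤ (M : ℝ) := by exact_mod_cast hmM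
      have : 0 ≤ lam - (m : ℕ) * ρ0 + S' := by nlinarith
      positivity
    have hKfac : 0 < (K.factorial : ℝ) := by exact_mod_cast K.factorial_pos
    rw [div_le_div_iff₀ (by positivity) (by positivity)]
    have := mul_le_mul_of_nonneg_right htele (le_of_lt (mul_pos hKfac hP'pos))
    nlinarith [this]
  
theorem combinatorial_lemma_real (K : ℕ) (hK : 0 < K) (ρ : Fin K → ℝ)
    (hρ : ∀ i, 0 < ρ i) (lam : ℝ) (hlam : 0 < lam) :
    (Nat.card {n : Fin K → ℕ // ∑ i, (n i : ℝ) * ρ i ≤ lam} : ℝ) ≤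
      (lam + ∑ i, ρ i) ^ K / ((K.factorial : ℝ) * ∏ i, ρ i) := by
  exact count_le K ρ hρ lam hlam.le
end

section
/- Let α, γ be positive real constants with α > e^γ / γ^γ. Then the equation α t^γ = e^t has a solution t_2 > γ, and any solution t_2 > γ satisfies log(α γ^γ) < t_2 < 2 log(α γ^γ). -/
open Real

theorem solution_bound (α γ : ℝ) (hα : 0 < α) (hγ : 0 < γ)
    (h : α > Real.exp γ / γ ^ γ) :
    (∃ t : ℝ, t > γ ∧ α * t ^ γ = Real.exp t) ∧
      ∀ t : ℝ, t > γ → α * t ^ γ = Real.exp t →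
        Real.log (α * γ ^ γ) < t ∧ t < 2 * Real.log (α * γ ^ γ) := by
  have hγγ : (0:ℝ) < γ ^ γ := Real.rpow_pos_of_pos hγ γ
  have hαγ : Real.exp γ < α * γ ^ γ := (div_lt_iff₀ hγγ).mp h
  set A := Real.log (α * γ ^ γ) with hAdef
  have hA_eq : A = Real.log α + γ * Real.log γ := by
    rw [hAdef, Real.log_mul (ne_of_gt hα) (ne_of_gt hγγ), Real.log_rpow hγ]
  have hAγ : γ < A := by
    have := Real.log_lt_log (Real.exp_pos γ) hαγ
    rwa [Real.log_exp] at this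
  have hApos : 0 < A := hγ.trans hAγ
  set B := 2 * A with hB
  have hBpos : 0 < B := by positivity
  have hγB : γ < B := by nlinarith
  -- key inequality : log α < B - γ * log B
  have hK : Real.log α < B - γ * Real.log B := by
    have hx : 1 < A / γ := (one_lt_div hγ).2 hAγ
    have h1 : Real.log (2 * (A / γ)) ≤ Real.log 2 + (A / γ - 1) := by
      rw [Real.log_mul two_ne_zero (by positivity)]
      have := Real.log_le_sub_one_of_pos (by positivity : (0:ℝ) < A / γ)
      linarith
    have h2 : Real.log 2 < 1 := by
      have := Real.log_two_lt_d9; linarith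
    have h3 : Real.log (2 * (A / γ)) < A / γ := by linarith
    have h4 : Real.log (2 * (A / γ)) = Real.log B - Real.log γ := by
      rw [hB, show 2 * (A / γ) = (2 * A) / γ by ring,
        Real.log_div (by positivity) (ne_of_gt hγ)]
    have h5 : γ * (Real.log B - Real.log γ) < A := by
      rw [← h4]
      calc γ * Real.log (2 * (A / γ)) < γ * (A / γ) := mul_lt_mul_of_pos_left h3 hγ
        _ = A := by field_simp
    have h6 : Real.log α = A - γ * Real.log γ := by rw [hA_eq]; ring
    nlinarith
  constructor
  · -- existence via IVT on f s = s - γ * log s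
    have hcont : ContinuousOn (fun s => s - γ * Real.log s) (Set.Icc γ B) := by
      apply continuousOn_id.sub
      exact continuousOn_const.mul (Real.continuousOn_log.mono (by
        intro x hx
        simp only [Set.mem_compl_iff, Set.mem_singleton_iff]
        exact ne_of_gt (lt_of_lt_of_le hγ hx.1)))
    have hfa : γ - γ * Real.log γ < Real.log α := by
      rw [hA_eq] at hAγ; linarith
    have hmem : Real.log α ∈ Set.Ioo ((fun s => s - γ * Real.log s) γ)
        ((fun s => s - γ * Real.log s) B) := ⟨hfa, hK⟩
    obtain ⟨t, ht, hft⟩ := intermediate_value_Ioo (le_of_lt hγB) hcont hmem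
    refine ⟨t, ht.1, ?_⟩
    have htpos : 0 < t := hγ.trans ht.1
    have hft' : t - γ * Real.log t = Real.log α := hft
    have heq : Real.log α + Real.log t * γ = t := by linarith
    rw [Real.rpow_def_of_pos htpos, ← Real.exp_log hα, ← Real.exp_add, heq]
  · intro t ht heq
    have htpos : 0 < t := hγ.trans ht
    have htγ : Real.exp t = α * Real.exp (Real.log t * γ) := by
      rw [← Real.rpow_def_of_pos htpos, heq]
    have hlogeq : t = Real.log α + γ * Real.log t := by
      have := congrArg Real.log htγ
      rw [Real.log_exp, Real.log_mul (ne_of_gt hα) (ne_of_gt (Real.exp_pos _)),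
        Real.log_exp] at this
      linarith
    constructor
    · rw [hA_eq]
      have := Real.log_lt_log hγ ht
      nlinarith
    · show t < B
      have hlog' : B * Real.log t ≤ B * Real.log B + t - B := by
        have h1 := Real.log_le_sub_one_of_pos (show (0:ℝ) < t / B by positivity)
        rw [Real.log_div (ne_of_gt htpos) (ne_of_gt hBpos)] at h1
        have h2 : B * (Real.log t - Real.log B) ≤ B * (t / B - 1) :=
          mul_le_mul_of_nonneg_left h1 hBpos.le
        have h3 : B * (t / B - 1) = t - B := by field_simp
        nlinarith
      have heqB : B * t = B * Real.log α + B * (γ * Real.log t) := by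
        linear_combination B * hlogeq
      nlinarith [mul_le_mul_of_nonneg_left hlog' hγ.le,
        mul_lt_mul_of_pos_left hK hBpos, heqB]
end

section
/- Let ε be a real number with 0 < ε ≤ 1/3. Then the number ⌊π / arccot( cosh(ε) · (√(1 + 2 cosh ε) + √(2 + 2 cosh ε)) )⌋ equals 12, i.e., π / arccot(cosh(ε)·(√(1+2cosh ε)+√(2+2cosh ε))) lies in the interval [12, 13). -/
open Real

lemma tan_pi_div_twelve' : Real.tan (π/12) = 2 - Real.sqrt 3 := by
  have hpi := Real.pi_pos
  have hc : 0 < Real.cos (π/12) :=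
    Real.cos_pos_of_mem_Ioo ⟨by linarith, by linarith⟩
  have e1 : Real.cos (π/6) = 2 * Real.cos (π/12)^2 - 1 := by
    rw [show (π/6 : ℝ) = 2*(π/12) by ring, Real.cos_two_mul]
  have e2 : Real.sin (π/6) = 2 * Real.sin (π/12) * Real.cos (π/12) := by
    rw [show (π/6 : ℝ) = 2*(π/12) by ring, Real.sin_two_mul]
  rw [Real.cos_pi_div_six] at e1
  rw [Real.sin_pi_div_six] at e2
  have h3 : Real.sqrt 3 ^ 2 = 3 := Real.sq_sqrt (by norm_num)
  have hc2 : Real.cos (π/12)^2 = (2 + Real.sqrt 3)/4 := by linarith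
  have hsc : Real.sin (π/12) * Real.cos (π/12) = 1/4 := by linarith
  have key : Real.sin (π/12) * Real.cos (π/12)
      = ((2 - Real.sqrt 3) * Real.cos (π/12)) * Real.cos (π/12) := by
    rw [hsc]; nlinarith [hc2, h3]
  have := mul_right_cancel₀ hc.ne' key
  rw [Real.tan_eq_sin_div_cos, this]
  field_simp

lemma cosh_third_lt : Real.cosh (1/3 : ℝ) < 1.0562 := by
  set u := Real.exp (1/3 : ℝ) with hu
  have hup : 0 < u := Real.exp_pos _
  have hcube : u ^ 3 = Real.exp 1 := by
    rw [hu, ← Real.exp_nat_mul]; norm_num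
  have h1 : u < 1.3957 := by
    nlinarith [Real.exp_one_lt_d9, sq_nonneg (u - 1.3957), sq_nonneg (u + 1.3957)]
  have h2 : 1.3956 < u := by
    nlinarith [Real.exp_one_gt_d9, sq_nonneg (u - 1.3956), sq_nonneg (u + 1.3956)]
  have hinv : Real.exp (-(1/3) : ℝ) = 1 / u := by
    rw [Real.exp_neg, hu, one_div]; norm_num
  have hch : Real.cosh (1/3 : ℝ) = (u + 1/u)/2 := by rw [Real.cosh_eq, hinv]
  have : 1/u < 0.71654 := by rw [div_lt_iff₀ hup]; nlinarith
  rw [hch]; linarith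

lemma tan_pi_div_thirteen_lt : Real.tan (π/13) < 0.24895 := by
  have hpi := Real.pi_pos
  have hpiu : π < 3.141593 := Real.pi_lt_d6.trans_le (by norm_num)
  set t := π/13 with ht
  have ht0 : 0 < t := by positivity
  have htu : t < 0.2416611 := by rw [ht]; linarith
  have hc : 0 < Real.cos t :=
    Real.cos_pos_of_mem_Ioo ⟨by linarith, by rw [ht]; linarith⟩
  have hsin : Real.sin t < t := Real.sin_lt ht0
  have hcos : 1 - t^2/2 < Real.cos t := Real.one_sub_sq_div_two_lt_cos ht0.ne'
  rw [Real.tan_eq_sin_div_cos, div_lt_iff₀ hc]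
  nlinarith [sq_nonneg t, mul_pos ht0 ht0]

theorem voronoi_angle_count (ε : ℝ) (hε0 : 0 < ε) (hε : ε ≤ 1 / 3) :
    ⌊π / Real.arctan (1 / (Real.cosh ε *
      (Real.sqrt (1 + 2 * Real.cosh ε) + Real.sqrt (2 + 2 * Real.cosh ε))))⌋ = 12 := by
  have hpi := Real.pi_pos
  set c := Real.cosh ε with hcdef
  have hc1 : 1 ≤ c := Real.one_le_cosh ε
  have hcu : c < 1.0562 := by
    have : c ≤ Real.cosh (1/3 : ℝ) := by
      rw [hcdef, Real.cosh_le_cosh]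
      rw [abs_of_pos hε0, abs_of_pos (by norm_num : (0:ℝ) < 1/3)]
      exact hε
    exact this.trans_lt cosh_third_lt
  -- sqrt bounds
  have h3nn : (0:ℝ) ≤ 3 := by norm_num
  have hs1l : Real.sqrt 3 ≤ Real.sqrt (1 + 2*c) := Real.sqrt_le_sqrt (by linarith)
  have hs2l : 2 ≤ Real.sqrt (2 + 2*c) := by
    have : Real.sqrt 4 ≤ Real.sqrt (2 + 2*c) := Real.sqrt_le_sqrt (by linarith)
    have h4 : Real.sqrt 4 = 2 := by
      rw [show (4:ℝ) = 2^2 by norm_num, Real.sqrt_sq (by norm_num)]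
    linarith
  have hs1u : Real.sqrt (1 + 2*c) ≤ 1.7643 := by
    have : Real.sqrt (1 + 2*c) ≤ Real.sqrt (1.7643^2) :=
      Real.sqrt_le_sqrt (by nlinarith)
    rwa [Real.sqrt_sq (by norm_num)] at this
  have hs2u : Real.sqrt (2 + 2*c) ≤ 2.028 := by
    have : Real.sqrt (2 + 2*c) ≤ Real.sqrt (2.028^2) :=
      Real.sqrt_le_sqrt (by nlinarith)
    rwa [Real.sqrt_sq (by norm_num)] at this
  set x := c * (Real.sqrt (1 + 2*c) + Real.sqrt (2 + 2*c)) with hxdef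
  have hsqrt3 : Real.sqrt 3 ^ 2 = 3 := Real.sq_sqrt h3nn
  have hsqrt3u : Real.sqrt 3 ≤ 1.7321 := by
    have : Real.sqrt 3 ≤ Real.sqrt (1.7321^2) := Real.sqrt_le_sqrt (by norm_num)
    rwa [Real.sqrt_sq (by norm_num)] at this
  have hsqrt3l : (1:ℝ) ≤ Real.sqrt 3 := by
    nlinarith [Real.sqrt_nonneg 3]
  have hxl : 2 + Real.sqrt 3 ≤ x := by
    rw [hxdef]
    nlinarith [Real.sqrt_nonneg (1+2*c), Real.sqrt_nonneg (2+2*c)]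
  have hxu : x < 4.0056 := by
    have hs : Real.sqrt (1 + 2*c) + Real.sqrt (2 + 2*c) ≤ 3.7923 := by linarith
    have : x ≤ 1.0562 * 3.7923 := by
      rw [hxdef]
      exact mul_le_mul hcu.le hs (by positivity) (by norm_num)
    linarith
  have hx0 : 0 < x := by nlinarith
  set A := Real.arctan (1/x) with hA
  have hA0 : 0 < A := by
    have := Real.arctan_strictMono (show (0:ℝ) < 1/x by positivity)
    rwa [Real.arctan_zero] at this
  -- A ≤ π/12
  have hAu : A ≤ π/12 := by
    have h1x : 1/x ≤ 2 - Real.sqrt 3 := by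
      rw [div_le_iff₀ hx0]
      nlinarith
    have := Real.arctan_strictMono.monotone h1x
    rw [← tan_pi_div_twelve'] at this
    rwa [Real.arctan_tan (by linarith) (by linarith)] at this
  -- π/13 < A
  have hAl : π/13 < A := by
    have h1x : Real.tan (π/13) < 1/x := by
      have : (0.24895:ℝ) < 1/x := by
        rw [lt_div_iff₀ hx0]; nlinarith
      linarith [tan_pi_div_thirteen_lt]
    have := Real.arctan_strictMono h1x
    rwa [Real.arctan_tan (by linarith) (by linarith)] at this
  have h12 : (12:ℝ) ≤ π / A := by
    rw [le_div_iff₀ hA0]; linarith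
  have h13 : π / A < 13 := by
    rw [div_lt_iff₀ hA0]; linarith
  rw [Int.floor_eq_iff]
  constructor
  · push_cast; linarith
  · push_cast; linarith
end

section
/- For real R' > 0 and ω > 0 with cosh(ω) ≤ cosh(R'/2), setting sin θ = (tanh ω / tanh(R'/2)) · (1/cosh ω) · (1 − √(1 − cosh²ω/cosh²(R'/2))) with θ ∈ (0, π/2), one has θ < π sinh(ω)/sinh(R'). -/
open Real

theorem theta_bound (R' ω θ : ℝ) (hR' : 0 < R') (hω : 0 < ω)
    (hcosh : Real.cosh ω ≤ Real.cosh (R' / 2))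
    (hθ0 : 0 < θ) (hθ1 : θ < π / 2)
    (hsin : Real.sin θ = (Real.tanh ω / Real.tanh (R' / 2)) * (1 / Real.cosh ω) *
      (1 - Real.sqrt (1 - Real.cosh ω ^ 2 / Real.cosh (R' / 2) ^ 2))) :
    θ < π * Real.sinh ω / Real.sinh R' := by
  have hcω : 0 < Real.cosh ω := Real.cosh_pos _
  have hcR : 0 < Real.cosh (R' / 2) := Real.cosh_pos _
  have hsR2 : 0 < Real.sinh (R' / 2) := Real.sinh_pos_iff.2 (by linarith)
  have hsω : 0 < Real.sinh ω := Real.sinh_pos_iff.2 hω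
  set x : ℝ := Real.cosh ω ^ 2 / Real.cosh (R' / 2) ^ 2 with hx
  have hx0 : 0 < x := by positivity
  have hx1 : x ≤ 1 := by
    rw [hx, div_le_one (by positivity)]
    exact pow_le_pow_left₀ hcω.le hcosh 2
  -- key: 1 - sqrt (1 - x) ≤ x
  have hsqrt : 1 - Real.sqrt (1 - x) ≤ x := by
    have h1 : (1 : ℝ) - x ≤ Real.sqrt (1 - x) := by
      nlinarith [Real.sq_sqrt (by linarith : (0:ℝ) ≤ 1 - x),
        Real.sqrt_nonneg (1 - x)]
    linarith
  have htR : 0 < Real.tanh (R' / 2) := by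
    rw [Real.tanh_eq_sinh_div_cosh]; positivity
  have htω : 0 < Real.tanh ω := by
    rw [Real.tanh_eq_sinh_div_cosh]; positivity
  have hcoef : 0 < Real.tanh ω / Real.tanh (R' / 2) * (1 / Real.cosh ω) := by positivity
  have hsinle : Real.sin θ ≤ 2 * Real.sinh ω / Real.sinh R' := by
    have hsinhR : Real.sinh R' = 2 * Real.sinh (R' / 2) * Real.cosh (R' / 2) := by
      have h := Real.sinh_two_mul (R' / 2)
      rw [show 2 * (R' / 2) = R' by ring] at h
      linarith
    have key : Real.tanh ω / Real.tanh (R' / 2) * (1 / Real.cosh ω) * x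
        = 2 * Real.sinh ω / Real.sinh R' := by
      rw [hsinhR, hx, Real.tanh_eq_sinh_div_cosh, Real.tanh_eq_sinh_div_cosh]
      field_simp
    calc Real.sin θ ≤ Real.tanh ω / Real.tanh (R' / 2) * (1 / Real.cosh ω) * x := by
          rw [hsin]; exact mul_le_mul_of_nonneg_left hsqrt hcoef.le
      _ = 2 * Real.sinh ω / Real.sinh R' := key
  have h2 : 2 / π * θ < Real.sin θ := Real.mul_lt_sin hθ0 hθ1
  have hπ : 0 < π := Real.pi_pos
  have : 2 / π * θ < 2 * Real.sinh ω / Real.sinh R' := lt_of_lt_of_le h2 hsinle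
  have hsR : 0 < Real.sinh R' := Real.sinh_pos_iff.2 hR'
  rw [lt_div_iff₀ hsR] at this ⊢
  rw [div_mul_eq_mul_div, div_mul_eq_mul_div, div_lt_iff₀ hπ] at this
  nlinarith
end
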